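/- Let (X,Y_0,Y_1,...,Y_K) take values in finite alphabets; let P = P_{X,Y_0}·∏_{k=1}^K P_{Y_k|X,Y_0} and let Q = Q_{Y_0}·Q_{X|Y_0}·Q_{Y_1,...,Y_K|Y_0} be such that Q has the same (X,Y_0)-marginal and the same (Y_0,Y_1,...,Y_K)-marginal as P. Then for every block length n and all deterministic maps φ_k^{(n)} : Y_k^n → finite sets (k = 1,...,K), the Kullback–Leibler divergence between the induced laws of (φ_1^{(n)}(Y_1^n),...,φ_K^{(n)}(Y_K^n), X^n, Y_0^n) under the n-fold products P^{⊗n} and Q^{⊗n} equals the conditional mutual information under P^{⊗n}: D( P_{φ_1(Y_1^n),...,φ_K(Y_K^n),X^n,Y_0^n} ‖ Q_{φ_1(Y_1^n),...,φ_K(Y_K^n),X^n,Y_0^n} ) = I( φ_1^{(n)}(Y_1^n),...,φ_K^{(n)}(Y_K^n); X^n | Y_0^n ). -/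
import Mathlib


open scoped BigOperators
open Finset
open scoped Classical

namespace DHT

/-- Pushforward of a distribution on a finite type under a map. -/
noncomputable def push {α β : Type*} [Fintype α] (p : α → ℝ) (f : α → β) : β → ℝ :=
  fun b => ∑ a, if f a = b then p a else 0

/-- Kullback–Leibler divergence between two pmfs on a finite type
(with the usual conventions `0 * log (0 / q) = 0`). -/
noncomputable def klDiv {α : Type*} [Fintype α] (p q : α → ℝ) : ℝ :=
  ∑ a, p a * Real.log (p a / q a)

/-- Conditional mutual information `I(A ; B | C)` of the coordinates of a joint pmf `p`
on a finite product `α × β × γ`. -/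
noncomputable def condMI {α β γ : Type*} [Fintype α] [Fintype β] [Fintype γ]
    (p : α × β × γ → ℝ) : ℝ :=
  ∑ x : α × β × γ,
    p x * Real.log ((p x * (∑ y : α × β × γ, if y.2.2 = x.2.2 then p y else 0)) /
      ((∑ y : α × β × γ, if y.1 = x.1 ∧ y.2.2 = x.2.2 then p y else 0) *
       (∑ y : α × β × γ, if y.2.1 = x.2.1 ∧ y.2.2 = x.2.2 then p y else 0)))

end DHT

open DHT

/-- `if`-then-else with the canonical classical decidability instance and `0` else-branch. -/
noncomputable def cite (c : Prop) (v : ℝ) : ℝ := @ite ℝ c (Classical.propDecidable c) v 0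

lemma cite_pos {c : Prop} (h : c) (v : ℝ) : cite c v = v := if_pos h
lemma cite_neg {c : Prop} (h : ¬c) (v : ℝ) : cite c v = 0 := if_neg h

lemma cite_eq_ite {c : Prop} {inst : Decidable c} (v : ℝ) :
    (@ite ℝ c inst v 0) = cite c v := by
  by_cases h : c
  · rw [if_pos h, cite_pos h]
  · rw [if_neg h, cite_neg h]

lemma cite_congr {p q : Prop} {v w : ℝ} (h : p ↔ q) (hv : v = w) :
    cite p v = cite q w := by
  by_cases hp : p
  · rw [cite_pos hp, cite_pos (h.mp hp), hv]
  · rw [cite_neg hp, cite_neg (fun hq => hp (h.mpr hq))]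

lemma cite_nonneg {c : Prop} {v : ℝ} (hv : 0 ≤ v) : 0 ≤ cite c v := by
  by_cases h : c
  · rw [cite_pos h]; exact hv
  · rw [cite_neg h]

section Aux
variable {A B C : Type*} [Fintype A] [Fintype B] [Fintype C]

lemma aux_ite_sum (P : Prop) (f : C → ℝ) :
    (∑ c, cite P (f c)) = cite P (∑ c, f c) := by
  by_cases h : P
  · rw [cite_pos h]
    exact Finset.sum_congr rfl fun c _ => cite_pos h _
  · rw [cite_neg h]
    calc (∑ c, cite P (f c)) = ∑ c : C, (0 : ℝ) :=
          Finset.sum_congr rfl fun c _ => cite_neg h _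
      _ = 0 := Finset.sum_const_zero

lemma aux_sum_single (y : B) (h : B → ℝ) : (∑ b, cite (b = y) (h b)) = h y := by
  rw [Finset.sum_eq_single y (fun b _ hb => cite_neg hb _)
    (fun hy => absurd (Finset.mem_univ y) hy), cite_pos rfl]

lemma aux_push_pred {α β : Type*} [Fintype α] [Fintype β] (p : α → ℝ) (f : α → β)
    (pr : β → Prop) :
    (∑ b, cite (pr b) (DHT.push p f b)) = ∑ a, cite (pr (f a)) (p a) := by
  have hpush : ∀ b, DHT.push p f b = ∑ a, cite (f a = b) (p a) := fun b => rfl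
  calc (∑ b, cite (pr b) (DHT.push p f b))
      = ∑ b, ∑ a, cite (pr b) (cite (f a = b) (p a)) := by
        refine Finset.sum_congr rfl fun b _ => ?_
        rw [hpush b, ← aux_ite_sum]
    _ = ∑ a, ∑ b, cite (pr b) (cite (f a = b) (p a)) := Finset.sum_comm
    _ = ∑ a, cite (pr (f a)) (p a) := by
        refine Finset.sum_congr rfl fun a _ => ?_
        have h : ∀ b, cite (pr b) (cite (f a = b) (p a))
            = cite (b = f a) (cite (pr b) (p a)) := fun b => by
          by_cases h2 : b = f a
          · subst h2
            rw [cite_pos rfl (p a), cite_pos rfl (cite (pr (f a)) (p a))]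
          · rw [cite_neg h2]
            by_cases h1 : pr b
            · rw [cite_pos h1, cite_neg (fun hfa => h2 hfa.symm)]
            · rw [cite_neg h1]
        rw [Finset.sum_congr rfl fun b _ => h b, aux_sum_single]

lemma aux_sum_prod {n : ℕ} (f : Fin n → A → ℝ) :
    (∑ g : Fin n → A, ∏ i, f i (g i)) = ∏ i, ∑ a, f i a := by
  rw [Finset.prod_univ_sum]
  simp [Fintype.piFinset_univ]

lemma sumP_b (y : B) (g : A × B × C → ℝ) :
    (∑ t : A × B × C, cite (t.2.1 = y) (g t)) = ∑ a, ∑ c, g (a, y, c) := by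
  rw [Fintype.sum_prod_type]
  refine Finset.sum_congr rfl fun a _ => ?_
  rw [Fintype.sum_prod_type]
  calc (∑ b, ∑ c, cite (b = y) (g (a, b, c)))
      = ∑ b, cite (b = y) (∑ c, g (a, b, c)) :=
        Finset.sum_congr rfl fun b _ => aux_ite_sum _ _
    _ = ∑ c, g (a, y, c) := aux_sum_single y _

lemma sumP_cb (pr : C → Prop) (y : B) (g : A × B × C → ℝ) :
    (∑ t : A × B × C, cite (pr t.2.2 ∧ t.2.1 = y) (g t))
      = ∑ a, ∑ c, cite (pr c) (g (a, y, c)) := by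
  have h : ∀ t : A × B × C, cite (pr t.2.2 ∧ t.2.1 = y) (g t)
      = cite (t.2.1 = y) (cite (pr t.2.2) (g t)) := fun t => by
    by_cases h1 : pr t.2.2 <;> by_cases h2 : t.2.1 = y
    · rw [cite_pos ⟨h1, h2⟩, cite_pos h2, cite_pos h1]
    · rw [cite_neg (fun hc => h2 hc.2), cite_neg h2]
    · rw [cite_neg (fun hc => h1 hc.1), cite_pos h2, cite_neg h1]
    · rw [cite_neg (fun hc => h2 hc.2), cite_neg h2]
  rw [Finset.sum_congr rfl fun t _ => h t]
  exact sumP_b y fun t => cite (pr t.2.2) (g t)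

lemma sumP_ab (x : A) (y : B) (g : A × B × C → ℝ) :
    (∑ t : A × B × C, cite (t.1 = x ∧ t.2.1 = y) (g t)) = ∑ c, g (x, y, c) := by
  have h : ∀ t : A × B × C, cite (t.1 = x ∧ t.2.1 = y) (g t)
      = cite (t.2.1 = y) (cite (t.1 = x) (g t)) := fun t => by
    by_cases h1 : t.1 = x <;> by_cases h2 : t.2.1 = y
    · rw [cite_pos ⟨h1, h2⟩, cite_pos h2, cite_pos h1]
    · rw [cite_neg (fun hc => h2 hc.2), cite_neg h2]
    · rw [cite_neg (fun hc => h1 hc.1), cite_pos h2, cite_neg h1]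
    · rw [cite_neg (fun hc => h2 hc.2), cite_neg h2]
  rw [Finset.sum_congr rfl fun t _ => h t]
  rw [sumP_b y fun t => cite (t.1 = x) (g t)]
  calc (∑ a, ∑ c, cite (a = x) (g (a, y, c)))
      = ∑ a, cite (a = x) (∑ c, g (a, y, c)) :=
        Finset.sum_congr rfl fun a _ => aux_ite_sum _ _
    _ = ∑ c, g (x, y, c) := aux_sum_single x _

lemma sumP_cab (pr : C → Prop) (x : A) (y : B) (g : A × B × C → ℝ) :
    (∑ t : A × B × C, cite (pr t.2.2 ∧ t.1 = x ∧ t.2.1 = y) (g t))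
      = ∑ c, cite (pr c) (g (x, y, c)) := by
  have h : ∀ t : A × B × C, cite (pr t.2.2 ∧ t.1 = x ∧ t.2.1 = y) (g t)
      = cite (t.1 = x ∧ t.2.1 = y) (cite (pr t.2.2) (g t)) := fun t => by
    by_cases h1 : pr t.2.2 <;> by_cases h2 : t.1 = x ∧ t.2.1 = y
    · rw [cite_pos ⟨h1, h2.1, h2.2⟩, cite_pos h2, cite_pos h1]
    · rw [cite_neg (fun hc => h2 ⟨hc.2.1, hc.2.2⟩), cite_neg h2]
    · rw [cite_neg (fun hc => h1 hc.1), cite_pos h2, cite_neg h1]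
    · rw [cite_neg (fun hc => h2 ⟨hc.2.1, hc.2.2⟩), cite_neg h2]
  rw [Finset.sum_congr rfl fun t _ => h t]
  exact sumP_ab x y fun t => cite (pr t.2.2) (g t)

def e3 {A B C : Type*} (n : ℕ) :
    ((Fin n → A) × (Fin n → B) × (Fin n → C)) ≃ (Fin n → A × B × C) where
  toFun t := fun i => (t.1 i, t.2.1 i, t.2.2 i)
  invFun ω := (fun i => (ω i).1, fun i => (ω i).2.1, fun i => (ω i).2.2)
  left_inv _ := rfl
  right_inv _ := rfl

end Aux

/-- For deterministic encoders applied to i.i.d. blocks, the KL divergence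
between the laws of `(φ₁(Y₁ⁿ),…,φ_K(Y_Kⁿ), Xⁿ, Y₀ⁿ)` under `P^{⊗n}` and `Q^{⊗n}` equals the
conditional mutual information `I(φ₁(Y₁ⁿ),…,φ_K(Y_Kⁿ); Xⁿ | Y₀ⁿ)` under `P^{⊗n}`. -/
theorem statement_14
    {K : ℕ} {𝒳 𝒴₀ : Type} {𝒴 : Fin K → Type}
    [Fintype 𝒳] [Fintype 𝒴₀] [∀ k, Fintype (𝒴 k)]
    (P Q : 𝒳 × 𝒴₀ × (∀ k, 𝒴 k) → ℝ)
    (hP0 : ∀ ω, 0 ≤ P ω) (hP1 : ∑ ω, P ω = 1)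
    (hQ0 : ∀ ω, 0 ≤ Q ω) (hQ1 : ∑ ω, Q ω = 1)
    -- `P = P_{X,Y₀} · ∏_k P_{Y_k | X,Y₀}`
    (pXY0 : 𝒳 × 𝒴₀ → ℝ) (w : ∀ k : Fin K, 𝒳 × 𝒴₀ → 𝒴 k → ℝ)
    (hw0 : ∀ k xy y, 0 ≤ w k xy y) (hw1 : ∀ k xy, ∑ y, w k xy y = 1)
    (hPfact : ∀ x y0 ys, P (x, y0, ys) = pXY0 (x, y0) * ∏ k, w k (x, y0) (ys k))
    -- `Q = Q_{Y₀} · Q_{X|Y₀} · Q_{Y₁…Y_K|Y₀}`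
    (q0 : 𝒴₀ → ℝ) (qX : 𝒴₀ → 𝒳 → ℝ) (qY : 𝒴₀ → (∀ k, 𝒴 k) → ℝ)
    (hQfact : ∀ x y0 ys, Q (x, y0, ys) = q0 y0 * qX y0 x * qY y0 ys)
    -- same `(X,Y₀)`-marginal and same `(Y₀,Y₁,…,Y_K)`-marginal
    (hMargXY0 : ∀ x y0, ∑ ys, Q (x, y0, ys) = ∑ ys, P (x, y0, ys))
    (hMargY : ∀ y0 ys, ∑ x, Q (x, y0, ys) = ∑ x, P (x, y0, ys))
    (n : ℕ) (M : Fin K → ℕ)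
    (φ : ∀ k : Fin K, (Fin n → 𝒴 k) → Fin (M k)) :
    klDiv
      (push (fun ω : Fin n → 𝒳 × 𝒴₀ × (∀ k, 𝒴 k) => ∏ i, P (ω i))
        (fun ω => ((fun k => φ k fun i => (ω i).2.2 k), fun i => (ω i).1, fun i => (ω i).2.1)))
      (push (fun ω : Fin n → 𝒳 × 𝒴₀ × (∀ k, 𝒴 k) => ∏ i, Q (ω i))
        (fun ω => ((fun k => φ k fun i => (ω i).2.2 k), fun i => (ω i).1, fun i => (ω i).2.1)))
    = condMI
      (push (fun ω : Fin n → 𝒳 × 𝒴₀ × (∀ k, 𝒴 k) => ∏ i, P (ω i))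
        (fun ω => ((fun k => φ k fun i => (ω i).2.2 k), fun i => (ω i).1, fun i => (ω i).2.1))) := by
  classical
  set Pn : (Fin n → 𝒳 × 𝒴₀ × (∀ k, 𝒴 k)) → ℝ := fun ω => ∏ i, P (ω i) with hPn
  set Qn : (Fin n → 𝒳 × 𝒴₀ × (∀ k, 𝒴 k)) → ℝ := fun ω => ∏ i, Q (ω i) with hQn
  set F : (Fin n → 𝒳 × 𝒴₀ × (∀ k, 𝒴 k)) → (∀ k, Fin (M k)) × (Fin n → 𝒳) × (Fin n → 𝒴₀) :=
    fun ω => ((fun k => φ k fun i => (ω i).2.2 k), fun i => (ω i).1, fun i => (ω i).2.1) with hF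
  set Zf : (Fin n → ∀ k, 𝒴 k) → (∀ k, Fin (M k)) := fun c k => φ k fun i => c i k with hZf
  -- single-letter identity
  have keyp : ∀ (a : 𝒳) (c : 𝒴₀) (b : ∀ k, 𝒴 k),
      Q (a, c, b) * (∑ a', ∑ b', P (a', c, b'))
        = (∑ a', P (a', c, b)) * (∑ b', P (a, c, b')) := by
    intro a c b
    have h1 : ∀ b', (∑ a', P (a', c, b')) = q0 c * (∑ a', qX c a') * qY c b' := by
      intro b'
      rw [← hMargY c b']
      simp only [hQfact]
      rw [← Finset.sum_mul, ← Finset.mul_sum]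
    have h2 : ∀ a', (∑ b', P (a', c, b')) = q0 c * qX c a' * (∑ b', qY c b') := by
      intro a'
      rw [← hMargXY0 a' c]
      simp only [hQfact]
      rw [← Finset.mul_sum]
    have h3 : (∑ a', ∑ b', P (a', c, b'))
        = q0 c * (∑ a', qX c a') * (∑ b', qY c b') := by
      rw [Finset.sum_congr rfl fun a' _ => h2 a', ← Finset.sum_mul, ← Finset.mul_sum]
    rw [hQfact, h1 b, h2 a, h3]; ring
  -- pushed Q mass
  have hQp : ∀ (t0 : (∀ k, Fin (M k)) × (Fin n → 𝒳) × (Fin n → 𝒴₀)),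
      push Qn F t0
        = ∑ c : Fin n → ∀ k, 𝒴 k,
            cite (Zf c = t0.1) (∏ i, Q (t0.2.1 i, t0.2.2 i, c i)) := by
    rintro ⟨z, x, y0⟩
    have h0 : push Qn F (z, x, y0) = ∑ ω, cite (F ω = (z, x, y0)) (Qn ω) := rfl
    rw [h0]
    have hiff : ∀ t : (Fin n → 𝒳) × (Fin n → 𝒴₀) × (Fin n → ∀ k, 𝒴 k),
        (F (e3 n t) = (z, x, y0)) ↔ (Zf t.2.2 = z ∧ t.1 = x ∧ t.2.1 = y0) := by
      intro t
      show ((Zf t.2.2, t.1, t.2.1) : (∀ k, Fin (M k)) × (Fin n → 𝒳) × (Fin n → 𝒴₀))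
          = (z, x, y0) ↔ _
      simp only [Prod.mk.injEq]
    calc (∑ ω, cite (F ω = (z, x, y0)) (Qn ω))
        = ∑ t : (Fin n → 𝒳) × (Fin n → 𝒴₀) × (Fin n → ∀ k, 𝒴 k),
            cite (Zf t.2.2 = z ∧ t.1 = x ∧ t.2.1 = y0)
              (∏ i, Q (t.1 i, t.2.1 i, t.2.2 i)) :=
          (Fintype.sum_equiv (e3 n) _ _ fun t => cite_congr (hiff t).symm rfl).symm
      _ = ∑ c, cite (Zf c = z) (∏ i, Q (x i, y0 i, c i)) :=
          sumP_cab (fun c => Zf c = z) x y0 (fun t : (Fin n → 𝒳) × (Fin n → 𝒴₀) × (Fin n → ∀ k, 𝒴 k) => ∏ i, Q (t.1 i, t.2.1 i, t.2.2 i))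
  -- Y0 marginal of pushed P
  have hPc : ∀ (t0 : (∀ k, Fin (M k)) × (Fin n → 𝒳) × (Fin n → 𝒴₀)),
      (∑ y, cite (y.2.2 = t0.2.2) (push Pn F y))
        = ∏ i, ∑ α, ∑ β, P (α, t0.2.2 i, β) := by
    rintro ⟨z, x, y0⟩
    calc (∑ y, cite (y.2.2 = ((z, x, y0) :
            (∀ k, Fin (M k)) × (Fin n → 𝒳) × (Fin n → 𝒴₀)).2.2) (push Pn F y))
        = ∑ ω, cite ((F ω).2.2 = y0) (Pn ω) := aux_push_pred Pn F _
      _ = ∑ t : (Fin n → 𝒳) × (Fin n → 𝒴₀) × (Fin n → ∀ k, 𝒴 k),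
            cite (t.2.1 = y0) (∏ i, P (t.1 i, t.2.1 i, t.2.2 i)) :=
          (Fintype.sum_equiv (e3 n) _ _ fun t => rfl).symm
      _ = ∑ a : Fin n → 𝒳, ∑ c : Fin n → ∀ k, 𝒴 k, ∏ i, P (a i, y0 i, c i) :=
          sumP_b y0 (fun t : (Fin n → 𝒳) × (Fin n → 𝒴₀) × (Fin n → ∀ k, 𝒴 k) => ∏ i, P (t.1 i, t.2.1 i, t.2.2 i))
      _ = ∑ a : Fin n → 𝒳, ∏ i, ∑ β, P (a i, y0 i, β) :=
          Finset.sum_congr rfl fun a _ => aux_sum_prod (fun i β => P (a i, y0 i, β))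
      _ = ∏ i, ∑ α, ∑ β, P (α, y0 i, β) := aux_sum_prod (fun i α => ∑ β, P (α, y0 i, β))
  -- (Z, Y0) marginal of pushed P
  have hPac : ∀ (t0 : (∀ k, Fin (M k)) × (Fin n → 𝒳) × (Fin n → 𝒴₀)),
      (∑ y, cite (y.1 = t0.1 ∧ y.2.2 = t0.2.2) (push Pn F y))
        = ∑ c, cite (Zf c = t0.1) (∏ i, ∑ α, P (α, t0.2.2 i, c i)) := by
    rintro ⟨z, x, y0⟩
    calc (∑ y, cite (y.1 = ((z, x, y0) :
              (∀ k, Fin (M k)) × (Fin n → 𝒳) × (Fin n → 𝒴₀)).1 ∧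
            y.2.2 = ((z, x, y0) :
              (∀ k, Fin (M k)) × (Fin n → 𝒳) × (Fin n → 𝒴₀)).2.2) (push Pn F y))
        = ∑ ω, cite ((F ω).1 = z ∧ (F ω).2.2 = y0) (Pn ω) := aux_push_pred Pn F _
      _ = ∑ t : (Fin n → 𝒳) × (Fin n → 𝒴₀) × (Fin n → ∀ k, 𝒴 k),
            cite (Zf t.2.2 = z ∧ t.2.1 = y0) (∏ i, P (t.1 i, t.2.1 i, t.2.2 i)) :=
          (Fintype.sum_equiv (e3 n) _ _ fun t => rfl).symm
      _ = ∑ a : Fin n → 𝒳, ∑ c : Fin n → ∀ k, 𝒴 k,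
            cite (Zf c = z) (∏ i, P (a i, y0 i, c i)) :=
          sumP_cb (fun c => Zf c = z) y0 (fun t : (Fin n → 𝒳) × (Fin n → 𝒴₀) × (Fin n → ∀ k, 𝒴 k) => ∏ i, P (t.1 i, t.2.1 i, t.2.2 i))
      _ = ∑ c : Fin n → ∀ k, 𝒴 k, ∑ a : Fin n → 𝒳,
            cite (Zf c = z) (∏ i, P (a i, y0 i, c i)) := Finset.sum_comm
      _ = ∑ c, cite (Zf c = z) (∏ i, ∑ α, P (α, y0 i, c i)) := by
          refine Finset.sum_congr rfl fun c _ => ?_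
          rw [aux_ite_sum (Zf c = z) (fun a : Fin n → 𝒳 => ∏ i, P (a i, y0 i, c i))]
          by_cases h : Zf c = z
          · rw [cite_pos h, cite_pos h, aux_sum_prod (fun i α => P (α, y0 i, c i))]
          · rw [cite_neg h, cite_neg h]
  -- (X, Y0) marginal of pushed P
  have hPbc : ∀ (t0 : (∀ k, Fin (M k)) × (Fin n → 𝒳) × (Fin n → 𝒴₀)),
      (∑ y, cite (y.2.1 = t0.2.1 ∧ y.2.2 = t0.2.2) (push Pn F y))
        = ∏ i, ∑ β, P (t0.2.1 i, t0.2.2 i, β) := by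
    rintro ⟨z, x, y0⟩
    calc (∑ y, cite (y.2.1 = ((z, x, y0) :
              (∀ k, Fin (M k)) × (Fin n → 𝒳) × (Fin n → 𝒴₀)).2.1 ∧
            y.2.2 = ((z, x, y0) :
              (∀ k, Fin (M k)) × (Fin n → 𝒳) × (Fin n → 𝒴₀)).2.2) (push Pn F y))
        = ∑ ω, cite ((F ω).2.1 = x ∧ (F ω).2.2 = y0) (Pn ω) := aux_push_pred Pn F _
      _ = ∑ t : (Fin n → 𝒳) × (Fin n → 𝒴₀) × (Fin n → ∀ k, 𝒴 k),
            cite (t.1 = x ∧ t.2.1 = y0) (∏ i, P (t.1 i, t.2.1 i, t.2.2 i)) :=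
          (Fintype.sum_equiv (e3 n) _ _ fun t => rfl).symm
      _ = ∑ c : Fin n → ∀ k, 𝒴 k, ∏ i, P (x i, y0 i, c i) :=
          sumP_ab x y0 (fun t : (Fin n → 𝒳) × (Fin n → 𝒴₀) × (Fin n → ∀ k, 𝒴 k) => ∏ i, P (t.1 i, t.2.1 i, t.2.2 i))
      _ = ∏ i, ∑ β, P (x i, y0 i, β) := aux_sum_prod (fun i β => P (x i, y0 i, β))
  -- key identity in closed form
  have hkey : ∀ (t0 : (∀ k, Fin (M k)) × (Fin n → 𝒳) × (Fin n → 𝒴₀)),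
      (∑ c, cite (Zf c = t0.1) (∏ i, ∑ α, P (α, t0.2.2 i, c i))) *
        (∏ i, ∑ β, P (t0.2.1 i, t0.2.2 i, β))
      = push Qn F t0 * (∏ i, ∑ α, ∑ β, P (α, t0.2.2 i, β)) := by
    intro t0
    rw [hQp t0, Finset.sum_mul, Finset.sum_mul]
    refine Finset.sum_congr rfl fun c _ => ?_
    by_cases h : Zf c = t0.1
    · rw [cite_pos h, cite_pos h, ← Finset.prod_mul_distrib, ← Finset.prod_mul_distrib]
      refine Finset.prod_congr rfl fun i _ => ?_
      have := keyp (t0.2.1 i) (t0.2.2 i) (c i)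
      linarith [this]
    · rw [cite_neg h, cite_neg h, zero_mul, zero_mul]
  -- nonnegativity of pushed P
  have hPp0 : ∀ t, 0 ≤ push Pn F t := by
    intro t
    have hform : push Pn F t = ∑ ω, cite (F ω = t) (Pn ω) := rfl
    rw [hform]
    exact Finset.sum_nonneg fun ω _ =>
      cite_nonneg (Finset.prod_nonneg fun i _ => hP0 _)
  -- generalized-instance forms of the marginals
  have hScG : ∀ (t0 : (∀ k, Fin (M k)) × (Fin n → 𝒳) × (Fin n → 𝒴₀))
      (inst : ∀ y : (∀ k, Fin (M k)) × (Fin n → 𝒳) × (Fin n → 𝒴₀),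
        Decidable (y.2.2 = t0.2.2)),
      (∑ y, @ite ℝ (y.2.2 = t0.2.2) (inst y) (push Pn F y) 0)
        = ∏ i, ∑ α, ∑ β, P (α, t0.2.2 i, β) := fun t0 inst =>
    (Finset.sum_congr rfl fun y _ => cite_eq_ite _).trans (hPc t0)
  have hPacG : ∀ (t0 : (∀ k, Fin (M k)) × (Fin n → 𝒳) × (Fin n → 𝒴₀))
      (inst : ∀ y : (∀ k, Fin (M k)) × (Fin n → 𝒳) × (Fin n → 𝒴₀),
        Decidable (y.1 = t0.1 ∧ y.2.2 = t0.2.2)),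
      (∑ y, @ite ℝ (y.1 = t0.1 ∧ y.2.2 = t0.2.2) (inst y) (push Pn F y) 0)
        = ∑ c, cite (Zf c = t0.1) (∏ i, ∑ α, P (α, t0.2.2 i, c i)) := fun t0 inst =>
    (Finset.sum_congr rfl fun y _ => cite_eq_ite _).trans (hPac t0)
  have hPbcG : ∀ (t0 : (∀ k, Fin (M k)) × (Fin n → 𝒳) × (Fin n → 𝒴₀))
      (inst : ∀ y : (∀ k, Fin (M k)) × (Fin n → 𝒳) × (Fin n → 𝒴₀),
        Decidable (y.2.1 = t0.2.1 ∧ y.2.2 = t0.2.2)),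
      (∑ y, @ite ℝ (y.2.1 = t0.2.1 ∧ y.2.2 = t0.2.2) (inst y) (push Pn F y) 0)
        = ∏ i, ∑ β, P (t0.2.1 i, t0.2.2 i, β) := fun t0 inst =>
    (Finset.sum_congr rfl fun y _ => cite_eq_ite _).trans (hPbc t0)
  -- conclude termwise
  unfold DHT.klDiv DHT.condMI
  refine Finset.sum_congr rfl fun t0 _ => ?_
  by_cases h0 : push Pn F t0 = 0
  · rw [h0, zero_mul, zero_mul]
  · have hle : push Pn F t0 ≤ ∑ y, cite (y.2.2 = t0.2.2) (push Pn F y) := by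
      have h := Finset.single_le_sum
        (f := fun y => cite (y.2.2 = t0.2.2) (push Pn F y))
        (fun y _ => cite_nonneg (hPp0 y)) (Finset.mem_univ t0)
      calc push Pn F t0 = cite (t0.2.2 = t0.2.2) (push Pn F t0) := (cite_pos rfl _).symm
        _ ≤ _ := h
    have hScne : (∏ i, ∑ α, ∑ β, P (α, t0.2.2 i, β)) ≠ 0 := by
      have heq : (∑ y, cite (y.2.2 = t0.2.2) (push Pn F y))
          = ∏ i, ∑ α, ∑ β, P (α, t0.2.2 i, β) := hPc t0
      have hpos : 0 < push Pn F t0 := lt_of_le_of_ne (hPp0 t0) (Ne.symm h0)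
      exact ne_of_gt (lt_of_lt_of_le hpos (heq ▸ hle))
    congr 1
    congr 1
    simp only [cite_eq_ite]
    rw [hPac t0, hPbc t0, hPc t0, hkey t0, mul_div_mul_right _ _ hScne]
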